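/- Let A = F_q[θ]. Let x ∈ A be such that for infinitely many monic irreducible polynomials P of A, x^{q^d} ≡ x (mod P^p), where d = deg P and p is the characteristic. Then x ∈ A^p, i.e., x is a p-th power in A. -/

import Mathlib

open Polynomial

theorem stmt_2 (Fq : Type) [Field Fq] [Fintype Fq] (p : ℕ) [Fact p.Prime] [CharP Fq p]
    (x : Polynomial Fq)
    (h : {P : Polynomial Fq | P.Monic ∧ Irreducible P ∧
        P ^ p ∣ x ^ (Fintype.card Fq ^ P.natDegree) - x}.Infinite) :
    ∃ y : Polynomial Fq, x = y ^ p := by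
  classical
  have hp : p.Prime := Fact.out
  -- Step 1: derivative x = 0
  have hderiv : derivative x = 0 := by
    by_contra hne
    have hsub : {P : Polynomial Fq | P.Monic ∧ Irreducible P ∧
        P ^ p ∣ x ^ (Fintype.card Fq ^ P.natDegree) - x} ⊆
        ↑(UniqueFactorizationMonoid.normalizedFactors (derivative x)).toFinset := by
      rintro P ⟨hmon, hirr, hdvd⟩
      have hq0 : ((Fintype.card Fq ^ P.natDegree : ℕ) : Fq) = 0 := by
        push_cast
        rw [FiniteField.cast_card_eq_zero, zero_pow hirr.natDegree_pos.ne']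
      have hd : derivative (x ^ (Fintype.card Fq ^ P.natDegree) - x) = - derivative x := by
        rw [derivative_sub, derivative_pow, hq0, map_zero, zero_mul, zero_mul, zero_sub]
      have h1 : P ^ (p - 1) ∣ derivative (x ^ (Fintype.card Fq ^ P.natDegree) - x) :=
        pow_sub_one_dvd_derivative_of_pow_dvd hdvd
      rw [hd, dvd_neg] at h1
      have hPd : P ∣ derivative x :=
        dvd_trans (dvd_pow_self P (Nat.sub_ne_zero_of_lt hp.one_lt)) h1
      obtain ⟨Q, hQmem, hQ⟩ :=
        UniqueFactorizationMonoid.exists_mem_normalizedFactors_of_dvd hne hirr hPd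
      have hPQ : P = Q := by
        have h2 : normalize Q = Q := UniqueFactorizationMonoid.normalize_normalized_factor Q hQmem
        have h3 : normalize P = P := hmon.normalize_eq_self
        rw [← h3, ← h2]
        exact normalize_eq_normalize hQ.dvd hQ.symm.dvd
      exact Finset.mem_coe.mpr (Multiset.mem_toFinset.mpr (hPQ ▸ hQmem))
    exact h (Set.Finite.subset (Multiset.toFinset _).finite_toSet hsub)
  -- Step 2: perfect field, zero derivative ⇒ p-th power
  have hexp : Polynomial.expand Fq p (Polynomial.contract p x) = x :=
    Polynomial.expand_contract p hderiv hp.ne_zero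
  refine ⟨(Polynomial.contract p x).map (frobeniusEquiv Fq p).symm, ?_⟩
  conv_lhs => rw [← hexp]
  exact polynomial_expand_eq Fq p _
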